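/- Let $t \ge 2$ and let $G$ be a graph (2-uniform hypergraph) on $[n]$ that contains no matching of size $t$ and no complete subgraph on $2t-1$ vertices. Then for any vertices $i,j$, the compressed graph $\pi_{ij}(G)$ also contains no complete subgraph on $2t-1$ vertices. -/
import Mathlib


open Finset

/-- Lagrangian polynomial: sum over edges of products of weights. -/
def lagPoly (G : Finset (Finset ℕ)) (x : ℕ → ℝ) : ℝ := ∑ e ∈ G, ∏ i ∈ e, x i

/-- A feasible weight vector on `[n] = {1,…,n}`. -/
def IsFeasible (n : ℕ) (x : ℕ → ℝ) : Prop :=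
  (∀ i, 0 ≤ x i) ∧ ∑ i ∈ Finset.Icc 1 n, x i = 1

/-- Lagrangian of a hypergraph on `[n]`. -/
noncomputable def lag (n : ℕ) (G : Finset (Finset ℕ)) : ℝ :=
  sSup {v : ℝ | ∃ x : ℕ → ℝ, IsFeasible n x ∧ lagPoly G x = v}

/-- `G` is an `r`-graph on the vertex set `{1,…,n}`. -/
def IsGraphOn (n r : ℕ) (G : Finset (Finset ℕ)) : Prop :=
  ∀ e ∈ G, e ⊆ Finset.Icc 1 n ∧ e.card = r

/-- The compression `π_{ij}(G)`: each edge `f ∪ {j}` with `f` avoiding `i,j` and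
`f ∪ {i} ∉ G` is replaced by `f ∪ {i}`. -/
def compress (G : Finset (Finset ℕ)) (i j : ℕ) : Finset (Finset ℕ) :=
  (G.filter fun e => ¬(j ∈ e ∧ i ∉ e ∧ insert i (e.erase j) ∉ G)) ∪
  ((G.filter fun e => j ∈ e ∧ i ∉ e ∧ insert i (e.erase j) ∉ G).image
    fun e => insert i (e.erase j))

/-- `G` contains `t` pairwise disjoint edges. -/
def HasMatching (G : Finset (Finset ℕ)) (t : ℕ) : Prop :=
  ∃ M : Finset (Finset ℕ), M ⊆ G ∧ M.card = t ∧
    (M : Set (Finset ℕ)).Pairwise fun e f => Disjoint e f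

/-- `G` contains a complete `r`-graph on `p` vertices. -/
def HasClique (G : Finset (Finset ℕ)) (p r : ℕ) : Prop :=
  ∃ S : Finset ℕ, S.card = p ∧ ∀ e ⊆ S, e.card = r → e ∈ G

lemma mem_compress {G : Finset (Finset ℕ)} {i j : ℕ} {e : Finset ℕ} :
    e ∈ compress G i j ↔
      (e ∈ G ∧ ¬(j ∈ e ∧ i ∉ e ∧ insert i (e.erase j) ∉ G)) ∨
      ∃ f, (f ∈ G ∧ (j ∈ f ∧ i ∉ f ∧ insert i (f.erase j) ∉ G)) ∧
        insert i (f.erase j) = e := by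
  simp [compress, Finset.mem_union, Finset.mem_filter, Finset.mem_image, and_assoc]

lemma matching_of_clique (G : Finset (Finset ℕ)) :
    ∀ m (T : Finset ℕ), T.card = 2*m →
    (∀ a ∈ T, ∀ b ∈ T, a ≠ b → ({a,b} : Finset ℕ) ∈ G) →
    ∃ M : Finset (Finset ℕ), M ⊆ G ∧ M.card = m ∧
      (M : Set (Finset ℕ)).Pairwise (fun e f => Disjoint e f) ∧
      ∀ e ∈ M, e ⊆ T := by
  intro m
  induction m with
  | zero => intro T _ _; exact ⟨∅, by simp, by simp, by simp, by simp⟩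
  | succ m ih =>
    intro T hT hcl
    have h1 : 0 < T.card := by omega
    obtain ⟨a, ha⟩ := Finset.card_pos.mp h1
    have h2 : 0 < (T.erase a).card := by
      rw [Finset.card_erase_of_mem ha]; omega
    obtain ⟨b, hb⟩ := Finset.card_pos.mp h2
    have hbT : b ∈ T := Finset.mem_of_mem_erase hb
    have hba : b ≠ a := Finset.ne_of_mem_erase hb
    set T' := (T.erase a).erase b with hT'
    have hT'card : T'.card = 2*m := by
      rw [hT', Finset.card_erase_of_mem hb, Finset.card_erase_of_mem ha]; omega
    have hT'sub : T' ⊆ T := fun x hx =>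
      Finset.mem_of_mem_erase (Finset.mem_of_mem_erase hx)
    obtain ⟨M, hMG, hMcard, hMp, hMT⟩ := ih T' hT'card
      (fun x hx y hy hxy => hcl x (hT'sub hx) y (hT'sub hy) hxy)
    have haT' : a ∉ T' := fun h => (Finset.ne_of_mem_erase (Finset.mem_of_mem_erase h)) rfl
    have hbT' : b ∉ T' := fun h => (Finset.ne_of_mem_erase h) rfl
    have habM : ({a,b} : Finset ℕ) ∉ M := fun h =>
      haT' (hMT _ h (Finset.mem_insert_self a {b}))
    refine ⟨insert {a,b} M, ?_, ?_, ?_, ?_⟩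
    · intro e he
      rcases Finset.mem_insert.mp he with rfl | he
      · exact hcl a ha b hbT (Ne.symm hba)
      · exact hMG he
    · rw [Finset.card_insert_of_notMem habM, hMcard]
    · rw [Finset.coe_insert]
      refine Set.pairwise_insert.mpr ⟨hMp, ?_⟩
      intro e he _
      have hd : Disjoint ({a,b} : Finset ℕ) e := by
        rw [Finset.disjoint_left]
        intro x hx hxe
        rcases Finset.mem_insert.mp hx with rfl | hx
        · exact haT' (hMT e he hxe)
        · rw [Finset.mem_singleton] at hx; subst hx
          exact hbT' (hMT e he hxe)
      exact ⟨hd, hd.symm⟩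
    · intro e he
      rcases Finset.mem_insert.mp he with rfl | he
      · intro x hx
        rcases Finset.mem_insert.mp hx with rfl | hx
        · exact ha
        · rw [Finset.mem_singleton] at hx; subst hx; exact hbT
      · exact fun x hx => hT'sub (hMT e he hx)

theorem compression_preserves_clique_free_graphs (n t : ℕ) (ht : 2 ≤ t)
    (G : Finset (Finset ℕ)) (hG : IsGraphOn n 2 G)
    (hM : ¬HasMatching G t) (hK : ¬HasClique G (2*t - 1) 2)
    (i j : ℕ) :
    ¬HasClique (compress G i j) (2*t - 1) 2 := by
  intro hC
  obtain ⟨S, hScard, hS⟩ := hC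
  by_cases hij : i = j
  · subst hij
    apply hK
    refine ⟨S, hScard, fun e he hcard => ?_⟩
    rcases mem_compress.mp (hS e he hcard) with ⟨h, _⟩ | ⟨f, ⟨_, hj, hi, _⟩, _⟩
    · exact h
    · exact absurd hj hi
  -- i ≠ j from here on
  have hA : ∀ e ⊆ S, e.card = 2 → i ∉ e → e ∈ G := by
    intro e he hcard hie
    rcases mem_compress.mp (hS e he hcard) with ⟨h, _⟩ | ⟨f, _, hfe⟩
    · exact h
    · exact absurd (hfe ▸ Finset.mem_insert_self i _) hie
  by_cases hiS : i ∈ S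
  swap
  · exact hK ⟨S, hScard, fun e he hcard => hA e he hcard (fun h => hiS (he h))⟩
  by_cases hjS : j ∈ S
  · -- case j ∈ S : S is a clique in G
    have hB : ∀ b ∈ S, b ≠ i → b ≠ j → ({i,b} : Finset ℕ) ∈ G := by
      intro b hb hbi hbj
      have hsub : ({j,b} : Finset ℕ) ⊆ S := by
        intro x hx
        rcases Finset.mem_insert.mp hx with rfl | hx
        · exact hjS
        · rw [Finset.mem_singleton] at hx; subst hx; exact hb
      have hcard : ({j,b} : Finset ℕ).card = 2 := Finset.card_pair (Ne.symm hbj)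
      rcases mem_compress.mp (hS _ hsub hcard) with ⟨hjbG, hcond⟩ | ⟨f, _, hfe⟩
      · have hiin : i ∉ ({j,b} : Finset ℕ) := by
          simp only [Finset.mem_insert, Finset.mem_singleton]
          push_neg
          exact ⟨hij, fun h => hbi h.symm⟩
        push_neg at hcond
        have h2 := hcond (Finset.mem_insert_self j {b}) hiin
        have herase : ({j,b} : Finset ℕ).erase j = {b} :=
          Finset.erase_insert (by simp only [Finset.mem_singleton]; exact fun h => hbj h.symm)
        rwa [herase] at h2
      · exfalso
        have hj' : j ∈ insert i (f.erase j) := by rw [hfe]; simp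
        rcases Finset.mem_insert.mp hj' with h | h
        · exact hij h.symm
        · exact Finset.notMem_erase j f h
    have hCij : ({i,j} : Finset ℕ) ∈ G := by
      have hsub : ({i,j} : Finset ℕ) ⊆ S := by
        intro x hx
        rcases Finset.mem_insert.mp hx with rfl | hx
        · exact hiS
        · rw [Finset.mem_singleton] at hx; subst hx; exact hjS
      rcases mem_compress.mp (hS _ hsub (Finset.card_pair hij)) with ⟨h, _⟩ | ⟨f, _, hfe⟩
      · exact h
      · exfalso
        have hj' : j ∈ insert i (f.erase j) := by rw [hfe]; simp
        rcases Finset.mem_insert.mp hj' with h | h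
        · exact hij h.symm
        · exact Finset.notMem_erase j f h
    apply hK
    refine ⟨S, hScard, fun e he hcard => ?_⟩
    obtain ⟨a, b, hab, rfl⟩ := Finset.card_eq_two.mp hcard
    have ha : a ∈ S := he (Finset.mem_insert_self a {b})
    have hb : b ∈ S := he (by simp)
    by_cases hia : i = a
    · subst hia
      by_cases hjb : b = j
      · subst hjb; exact hCij
      · exact hB b hb (fun h => hab h.symm) hjb
    · by_cases hib : i = b
      · subst hib
        rw [Finset.pair_comm]
        by_cases hja : a = j
        · subst hja; exact hCij
        · exact hB a ha (fun h => hia h.symm) hja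
      · apply hA _ he hcard
        simp only [Finset.mem_insert, Finset.mem_singleton]
        push_neg
        exact ⟨hia, hib⟩
  · -- case j ∉ S
    have hDis : ∀ b ∈ S, b ≠ i →
        (({i,b} : Finset ℕ) ∈ G ∨
          (({j,b} : Finset ℕ) ∈ G ∧ ({i,b} : Finset ℕ) ∉ G)) := by
      intro b hb hbi
      have hsub : ({i,b} : Finset ℕ) ⊆ S := by
        intro x hx
        rcases Finset.mem_insert.mp hx with rfl | hx
        · exact hiS
        · rw [Finset.mem_singleton] at hx; subst hx; exact hb
      have hcard : ({i,b} : Finset ℕ).card = 2 := Finset.card_pair (Ne.symm hbi)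
      rcases mem_compress.mp (hS _ hsub hcard) with ⟨h, _⟩ | ⟨f, ⟨hfG, hjf, hif, hnew⟩, hfe⟩
      · exact Or.inl h
      · right
        have hcf : f.card = 2 := (hG f hfG).2
        have h1 : (f.erase j).card = 1 := by
          rw [Finset.card_erase_of_mem hjf, hcf]
        obtain ⟨x, hx⟩ := Finset.card_eq_one.mp h1
        have hxb : x = b := by
          have hxm : x ∈ ({i,b} : Finset ℕ) := by
            rw [← hfe, hx]; simp
          rcases Finset.mem_insert.mp hxm with rfl | hxm
          · exact absurd (Finset.mem_of_mem_erase
              (hx ▸ Finset.mem_singleton_self x)) hif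
          · exact Finset.mem_singleton.mp hxm
        subst hxb
        have hfb : f = ({j, x} : Finset ℕ) := by
          rw [← Finset.insert_erase hjf, hx]
        rw [hfe] at hnew
        exact ⟨hfb ▸ hfG, hnew⟩
    by_cases h0 : ∀ b ∈ S, b ≠ i → ({i,b} : Finset ℕ) ∈ G
    · apply hK
      refine ⟨S, hScard, fun e he hcard => ?_⟩
      obtain ⟨a, b, hab, rfl⟩ := Finset.card_eq_two.mp hcard
      have ha : a ∈ S := he (Finset.mem_insert_self a {b})
      have hb : b ∈ S := he (by simp)
      by_cases hia : i = a
      · subst hia; exact h0 b hb (fun h => hab h.symm)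
      · by_cases hib : i = b
        · subst hib
          rw [Finset.pair_comm]
          exact h0 a ha (fun h => hia h.symm)
        · apply hA _ he hcard
          simp only [Finset.mem_insert, Finset.mem_singleton]
          push_neg
          exact ⟨hia, hib⟩
    · push_neg at h0
      obtain ⟨b0, hb0S, hb0i, hib0⟩ := h0
      have hjb0 : ({j,b0} : Finset ℕ) ∈ G := by
        rcases hDis b0 hb0S hb0i with h | ⟨h, _⟩
        · exact absurd h hib0
        · exact h
      by_cases h1 : ∀ b ∈ S, b ≠ i → ({j,b} : Finset ℕ) ∈ G
      · -- clique on insert j (S.erase i)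
        apply hK
        have hjE : j ∉ S.erase i := fun h => hjS (Finset.mem_of_mem_erase h)
        refine ⟨insert j (S.erase i), ?_, ?_⟩
        · rw [Finset.card_insert_of_notMem hjE, Finset.card_erase_of_mem hiS, hScard]
          omega
        · intro e he hcard
          obtain ⟨a, b, hab, rfl⟩ := Finset.card_eq_two.mp hcard
          have ha : a ∈ insert j (S.erase i) := he (Finset.mem_insert_self a {b})
          have hb : b ∈ insert j (S.erase i) := he (by simp)
          by_cases hja : j = a
          · subst hja
            have hb' : b ∈ S.erase i := by
              rcases Finset.mem_insert.mp hb with h | h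
              · exact absurd h.symm hab
              · exact h
            exact h1 b (Finset.mem_of_mem_erase hb') (Finset.ne_of_mem_erase hb')
          · by_cases hjb : j = b
            · subst hjb
              rw [Finset.pair_comm]
              have ha' : a ∈ S.erase i := by
                rcases Finset.mem_insert.mp ha with h | h
                · exact absurd h.symm hja
                · exact h
              exact h1 a (Finset.mem_of_mem_erase ha') (Finset.ne_of_mem_erase ha')
            · have ha' : a ∈ S.erase i := by
                rcases Finset.mem_insert.mp ha with h | h
                · exact absurd h.symm hja
                · exact h
              have hb' : b ∈ S.erase i := by
                rcases Finset.mem_insert.mp hb with h | h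
                · exact absurd h.symm hjb
                · exact h
              apply hA
              · intro x hx
                rcases Finset.mem_insert.mp hx with rfl | hx
                · exact Finset.mem_of_mem_erase ha'
                · rw [Finset.mem_singleton] at hx; subst hx
                  exact Finset.mem_of_mem_erase hb'
              · exact hcard
              · simp only [Finset.mem_insert, Finset.mem_singleton]
                push_neg
                exact ⟨fun h => (Finset.ne_of_mem_erase ha') h.symm,
                       fun h => (Finset.ne_of_mem_erase hb') h.symm⟩
      · push_neg at h1
        obtain ⟨b1, hb1S, hb1i, hjb1⟩ := h1
        have hib1 : ({i,b1} : Finset ℕ) ∈ G := by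
          rcases hDis b1 hb1S hb1i with h | ⟨h, _⟩
          · exact h
          · exact absurd h hjb1
        have hb01 : b0 ≠ b1 := by rintro rfl; exact hjb1 hjb0
        -- build a matching of size t
        set T := ((S.erase i).erase b0).erase b1 with hTdef
        have hTmem : ∀ x ∈ T, x ∈ S ∧ x ≠ i ∧ x ≠ b0 ∧ x ≠ b1 := by
          intro x hx
          simp only [hTdef, Finset.mem_erase] at hx
          exact ⟨hx.2.2.2, hx.2.2.1, hx.2.1, hx.1⟩
        have hjT : j ∉ T := fun h => hjS (hTmem j h).1
        have hTcard : T.card = 2 * (t - 2) := by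
          have hb0e : b0 ∈ S.erase i := Finset.mem_erase.mpr ⟨hb0i, hb0S⟩
          have hb1e : b1 ∈ (S.erase i).erase b0 :=
            Finset.mem_erase.mpr ⟨hb01.symm, Finset.mem_erase.mpr ⟨hb1i, hb1S⟩⟩
          rw [hTdef, Finset.card_erase_of_mem hb1e, Finset.card_erase_of_mem hb0e,
            Finset.card_erase_of_mem hiS, hScard]
          omega
        obtain ⟨M0, hM0G, hM0card, hM0p, hM0T⟩ :=
          matching_of_clique G (t-2) T hTcard (by
            intro a haT b hbT hab
            apply hA
            · intro x hx
              rcases Finset.mem_insert.mp hx with rfl | hx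
              · exact (hTmem _ haT).1
              · rw [Finset.mem_singleton] at hx; subst hx
                exact (hTmem _ hbT).1
            · exact Finset.card_pair hab
            · simp only [Finset.mem_insert, Finset.mem_singleton]
              push_neg
              exact ⟨fun h => (hTmem a haT).2.1 h.symm,
                     fun h => (hTmem b hbT).2.1 h.symm⟩)
        apply hM
        have he1T : ∀ e ∈ M0, i ∉ e ∧ b1 ∉ e ∧ j ∉ e ∧ b0 ∉ e := by
          intro e heM
          have hsub := hM0T e heM
          exact ⟨fun h => (hTmem i (hsub h)).2.1 rfl,
                 fun h => (hTmem b1 (hsub h)).2.2.2 rfl,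
                 fun h => hjT (hsub h),
                 fun h => (hTmem b0 (hsub h)).2.2.1 rfl⟩
        have hne12 : ({i,b1} : Finset ℕ) ≠ ({j,b0} : Finset ℕ) := by
          intro h
          have : i ∈ ({j,b0} : Finset ℕ) := h ▸ Finset.mem_insert_self i {b1}
          rcases Finset.mem_insert.mp this with h' | h'
          · exact hij h'
          · exact hb0i (Finset.mem_singleton.mp h').symm
        have hd12 : Disjoint ({i,b1} : Finset ℕ) ({j,b0} : Finset ℕ) := by
          rw [Finset.disjoint_left]
          intro x hx hx'
          rcases Finset.mem_insert.mp hx with rfl | hx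
          · rcases Finset.mem_insert.mp hx' with h' | h'
            · exact hij h'
            · exact hb0i (Finset.mem_singleton.mp h').symm
          · rw [Finset.mem_singleton] at hx; subst hx
            rcases Finset.mem_insert.mp hx' with h' | h'
            · exact hjS (h' ▸ hb1S)
            · exact hb01 (Finset.mem_singleton.mp h').symm
        have h1M0 : ({i,b1} : Finset ℕ) ∉ M0 := fun h =>
          (he1T _ h).1 (Finset.mem_insert_self i {b1})
        have h2M0 : ({j,b0} : Finset ℕ) ∉ M0 := fun h =>
          (he1T _ h).2.2.1 (Finset.mem_insert_self j {b0})
        have hd1 : ∀ e ∈ M0, Disjoint ({i,b1} : Finset ℕ) e := by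
          intro e heM
          rw [Finset.disjoint_left]
          intro x hx hxe
          rcases Finset.mem_insert.mp hx with rfl | hx
          · exact (he1T e heM).1 hxe
          · rw [Finset.mem_singleton] at hx; subst hx
            exact (he1T e heM).2.1 hxe
        have hd2 : ∀ e ∈ M0, Disjoint ({j,b0} : Finset ℕ) e := by
          intro e heM
          rw [Finset.disjoint_left]
          intro x hx hxe
          rcases Finset.mem_insert.mp hx with rfl | hx
          · exact (he1T e heM).2.2.1 hxe
          · rw [Finset.mem_singleton] at hx; subst hx
            exact (he1T e heM).2.2.2 hxe
        refine ⟨insert {i,b1} (insert {j,b0} M0), ?_, ?_, ?_⟩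
        · intro e heM
          rcases Finset.mem_insert.mp heM with rfl | heM
          · exact hib1
          · rcases Finset.mem_insert.mp heM with rfl | heM
            · exact hjb0
            · exact hM0G heM
        · rw [Finset.card_insert_of_notMem, Finset.card_insert_of_notMem h2M0,
            hM0card]
          · omega
          · intro h
            rcases Finset.mem_insert.mp h with h' | h'
            · exact hne12 h'
            · exact h1M0 h'
        · rw [Finset.coe_insert, Finset.coe_insert, Set.pairwise_insert,
            Set.pairwise_insert]
          refine ⟨⟨hM0p, ?_⟩, ?_⟩
          · intro e heM _
            exact ⟨hd2 e heM, (hd2 e heM).symm⟩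
          · intro e heM _
            rcases heM with rfl | heM
            · exact ⟨hd12, hd12.symm⟩
            · exact ⟨hd1 e heM, (hd1 e heM).symm⟩
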